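/- Let A be a prime nontrivial superalgebra over a commutative unital ring φ with 1/2 ∈ φ, let I be a nonzero proper ideal of A, and let U be a graded additive subgroup of A such that [U, I] ⊆ U (superbracket), u∘v ∈ Z for every u, v ∈ U₀, and u∘v = 0 for every u, v ∈ U₁. Assume moreover that [[[U,I],[U,I]], I] = 0. Then: (1) [U,I]₀ ⊆ Z (the even component of [U,I] is central); (2) [U₀, I₀] = 0; and (3) u₁v₁ ∈ Z for all u₁, v₁ ∈ U₁. -/

import Mathlib

open DirectSum

/-- The sign `(−1)^{ij}` for degrees `i j : ZMod 2`. -/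
def ssign (i j : ZMod 2) : ℤ := if i = 1 ∧ j = 1 then -1 else 1

variable {φ A : Type*}

section
variable [CommRing φ] [Ring A] [Algebra φ A]

/-- Superbracket `[x,y] = xy − (−1)^{ij} yx` of homogeneous elements of degrees `i`, `j`. -/
def sbr (i j : ZMod 2) (x y : A) : A := x * y - ssign i j • (y * x)

/-- Supercircle product `x∘y = xy + (−1)^{ij} yx` of homogeneous elements of degrees `i`, `j`. -/
def scirc (i j : ZMod 2) (x y : A) : A := x * y + ssign i j • (y * x)

/-- A graded two-sided ideal of the superalgebra `A = ⨁ 𝒜 i`. -/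
structure SuperIdeal (𝒜 : ZMod 2 → Submodule φ A) [GradedAlgebra 𝒜] where
  carrier : Submodule φ A
  mul_mem_left : ∀ (a x : A), x ∈ carrier → a * x ∈ carrier
  mul_mem_right : ∀ (a x : A), x ∈ carrier → x * a ∈ carrier
  graded' : ∀ (i : ZMod 2), ∀ x ∈ carrier, ((DirectSum.decompose 𝒜 x) i : A) ∈ carrier

variable (𝒜 : ZMod 2 → Submodule φ A)

/-- A superalgebra is prime if `I⬝J = 0` forces `I = 0` or `J = 0` for graded ideals `I`, `J`. -/
def SuperPrime [GradedAlgebra 𝒜] : Prop :=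
  ∀ I J : SuperIdeal 𝒜, (∀ x ∈ I.carrier, ∀ y ∈ J.carrier, x * y = 0) →
    I.carrier = ⊥ ∨ J.carrier = ⊥

/-- A superalgebra is semiprime if it has no nonzero graded ideal of square zero. -/
def SuperSemiprime [GradedAlgebra 𝒜] : Prop :=
  ∀ I : SuperIdeal 𝒜, (∀ x ∈ I.carrier, ∀ y ∈ I.carrier, x * y = 0) → I.carrier = ⊥

/-- `Z`, the even part of the center of `A`. -/
def evenCenter : Set A := {z : A | z ∈ 𝒜 0 ∧ ∀ x : A, z * x = x * z}

/-- A subset `M` of `A` is dense if the (non-unital) subalgebra of `A` generated by `M`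
contains a nonzero ideal of `A`. -/
def IsDenseIn [GradedAlgebra 𝒜] (M : Set A) : Prop :=
  ∃ J : SuperIdeal 𝒜, J.carrier ≠ ⊥ ∧
    (J.carrier : Set A) ⊆ NonUnitalAlgebra.adjoin φ M

/-- A superinvolution on the superalgebra `A`. -/
structure Superinvolution (𝒜 : ZMod 2 → Submodule φ A) where
  toFun : A →ₗ[φ] A
  grading : ∀ (i : ZMod 2), ∀ x ∈ 𝒜 i, toFun x ∈ 𝒜 i
  invol : ∀ x : A, toFun (toFun x) = x
  mul_rev : ∀ (i j : ZMod 2), ∀ x ∈ 𝒜 i, ∀ y ∈ 𝒜 j,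
    toFun (x * y) = ssign i j • (toFun y * toFun x)

/-- A Lie ideal of the Lie superalgebra `K` of skew elements of `(A,*)`: a graded
`φ`-submodule of `K` with `[U,K] ⊆ U`. -/
structure LieIdealOfSkew [GradedAlgebra 𝒜] (σ : Superinvolution 𝒜) where
  carrier : Submodule φ A
  skew : ∀ x ∈ carrier, σ.toFun x = -x
  graded' : ∀ (i : ZMod 2), ∀ x ∈ carrier, ((DirectSum.decompose 𝒜 x) i : A) ∈ carrier
  bracket_mem : ∀ (i j : ZMod 2) (u k : A), u ∈ carrier → u ∈ 𝒜 i →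
    k ∈ 𝒜 j → σ.toFun k = -k → sbr i j u k ∈ carrier

/-- The additive span of superbrackets of homogeneous elements of `S` and `T`. -/
def superBrAdd (S T : Set A) : AddSubgroup A :=
  AddSubgroup.closure
    {z : A | ∃ (i j : ZMod 2) (x y : A), x ∈ S ∧ x ∈ 𝒜 i ∧ y ∈ T ∧ y ∈ 𝒜 j ∧ z = sbr i j x y}

/-- The `φ`-submodule spanned by superbrackets of homogeneous elements of `S` and `T`. -/
def superBrSpan (S T : Set A) : Submodule φ A :=
  Submodule.span φ
    {z : A | ∃ (i j : ZMod 2) (x y : A), x ∈ S ∧ x ∈ 𝒜 i ∧ y ∈ T ∧ y ∈ 𝒜 j ∧ z = sbr i j x y}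

end

/-- Data exhibiting the prime superalgebra `A` as a central order in a simple superalgebra `B`
that is 4-dimensional over its center. -/
structure CentralOrderIn4DimSimple (φ : Type*) [CommRing φ] {A : Type*} [Ring A] [Algebra φ A]
    (𝒜 : ZMod 2 → Submodule φ A) [GradedAlgebra 𝒜] where
  B : Type
  [ringB : Ring B]
  [algB : Algebra φ B]
  ℬ : ZMod 2 → Submodule φ B
  [gradedB : GradedAlgebra ℬ]
  ι : A →ₐ[φ] B
  inj : Function.Injective ι
  grading : ∀ (i : ZMod 2), ∀ x ∈ 𝒜 i, ι x ∈ ℬ i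
  central_unit : ∀ z ∈ evenCenter 𝒜, z ≠ 0 → IsUnit (ι z)
  localized : ∀ b : B, ∃ z a : A, z ∈ evenCenter 𝒜 ∧ z ≠ 0 ∧ ι z * b = ι a
  sq_ne_zero : ∃ x y : B, x * y ≠ 0
  simple : ∀ J : SuperIdeal ℬ, J.carrier = ⊥ ∨ J.carrier = ⊤
  dim4 : Module.finrank (Subring.center B) B = 4


set_option synthInstance.maxHeartbeats 1000000
set_option maxHeartbeats 2000000
set_option linter.unusedSectionVars false
set_option linter.unnecessarySimpa false

section AuxSteps
variable [CommRing φ] [Ring A] [Algebra φ A] (𝒜 : ZMod 2 → Submodule φ A) [GradedAlgebra 𝒜]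

theorem stp_zmod2_cases : ∀ j : ZMod 2, j = 0 ∨ j = 1 := by decide

theorem stp_ssign_add : ∀ (τ ξ υ : ZMod 2), ssign τ (ξ + υ) = ssign τ ξ * ssign τ υ := by decide
theorem stp_ssign_zero : ∀ (j : ZMod 2), ssign 0 j = 1 := by decide

theorem stp_memcast {i j : ZMod 2} (h : i = j) {x : A} (hx : x ∈ 𝒜 i) : x ∈ 𝒜 j := h ▸ hx

theorem stp_sbr00 (x y : A) : sbr 0 0 x y = x * y - y * x := by
  simp [sbr, show ssign 0 0 = 1 from by decide]
theorem stp_sbr01 (x y : A) : sbr 0 1 x y = x * y - y * x := by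
  simp [sbr, show ssign 0 1 = 1 from by decide]
theorem stp_sbr10 (x y : A) : sbr 1 0 x y = x * y - y * x := by
  simp [sbr, show ssign 1 0 = 1 from by decide]
theorem stp_sbr11 (x y : A) : sbr 1 1 x y = x * y + y * x := by
  simp [sbr, show ssign 1 1 = -1 from by decide, sub_neg_eq_add]
theorem stp_scirc00 (x y : A) : scirc 0 0 x y = x * y + y * x := by
  simp [scirc, show ssign 0 0 = 1 from by decide]
theorem stp_scirc11 (x y : A) : scirc 1 1 x y = x * y - y * x := by
  simp [scirc, show ssign 1 1 = -1 from by decide, sub_eq_add_neg]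

theorem stp_half_eq {φ : Type*} [CommRing φ] [Invertible (2:φ)] {A : Type*} [Ring A] [Algebra φ A]
    {x y : A} (h : x + x = y + y) : x = y := by
  have h2 : (2:φ) • x = (2:φ) • y := by rw [two_smul, two_smul]; exact h
  calc x = ((⅟2 * 2 : φ)) • x := by rw [invOf_mul_self, one_smul]
    _ = (⅟2:φ) • ((2:φ) • x) := by rw [mul_smul]
    _ = (⅟2:φ) • ((2:φ) • y) := by rw [h2]
    _ = ((⅟2 * 2 : φ)) • y := by rw [mul_smul]
    _ = y := by rw [invOf_mul_self, one_smul]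

theorem stp_half_sub {φ : Type*} [CommRing φ] [Invertible (2:φ)] {A : Type*} [Ring A] [Algebra φ A]
    {x y : A} (h : x - y = y - x) : x = y := by
  refine stp_half_eq (φ := φ) ?_
  calc x + x = (x - y) + (y + x) := by abel
    _ = (y - x) + (y + x) := by rw [h]
    _ = y + y := by abel

theorem stp_dsplit (x : A) : ((decompose 𝒜 x 0 : A)) + (decompose 𝒜 x 1 : A) = x := by
  classical
  have h : ∑ i ∈ DFinsupp.support (decompose 𝒜 x), (decompose 𝒜 x i : A) = x :=
    DirectSum.sum_support_decompose 𝒜 x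
  have h2 : ∑ i : ZMod 2, (decompose 𝒜 x i : A) = x := by
    rw [← Finset.sum_subset (Finset.subset_univ _) (fun i _ hi => by
      rw [DFinsupp.notMem_support_iff.mp hi]; simp)]
    exact h
  have h3 : (Finset.univ : Finset (ZMod 2)) = {0, 1} := by decide
  rw [h3] at h2
  simpa using h2

theorem stp_Zsmul {r : φ} {z : A} (hz : z ∈ evenCenter 𝒜) : r • z ∈ evenCenter 𝒜 := by
  refine ⟨Submodule.smul_mem _ _ hz.1, fun x => ?_⟩
  rw [Algebra.smul_mul_assoc, Algebra.mul_smul_comm, hz.2]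

theorem stp_Zadd {z w : A} (hz : z ∈ evenCenter 𝒜) (hw : w ∈ evenCenter 𝒜) :
    z + w ∈ evenCenter 𝒜 :=
  ⟨Submodule.add_mem _ hz.1 hw.1, fun x => by rw [add_mul, mul_add, hz.2, hw.2]⟩

theorem stp_Zzero : (0 : A) ∈ evenCenter 𝒜 :=
  ⟨Submodule.zero_mem _, fun x => by rw [zero_mul, mul_zero]⟩

theorem stp_Zneg {z : A} (hz : z ∈ evenCenter 𝒜) : -z ∈ evenCenter 𝒜 :=
  ⟨Submodule.neg_mem _ hz.1, fun x => by rw [neg_mul, mul_neg, hz.2]⟩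

theorem stp_Zhalf [Invertible (2:φ)] {z : A} (hz : z + z ∈ evenCenter 𝒜) : z ∈ evenCenter 𝒜 := by
  have hzz : z = (⅟2:φ) • (z + z) := by
    rw [← two_smul φ z, smul_smul, invOf_mul_self, one_smul]
  rw [hzz]; exact stp_Zsmul 𝒜 hz

/-- The graded two-sided ideal generated by a homogeneous element. -/
def stp_genIdeal (a : A) {i : ZMod 2} (ha : a ∈ 𝒜 i) : SuperIdeal 𝒜 where
  carrier := Submodule.span φ {z | ∃ x y : A, z = x * a * y}
  mul_mem_left := by
    intro b x hx
    induction hx using Submodule.span_induction with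
    | mem m hm => obtain ⟨x, y, rfl⟩ := hm
                  exact Submodule.subset_span ⟨b * x, y, by noncomm_ring⟩
    | zero => simpa using Submodule.zero_mem _
    | add m n _ _ hm hn => simpa [mul_add] using Submodule.add_mem _ hm hn
    | smul r m _ hm => simpa [Algebra.mul_smul_comm] using Submodule.smul_mem _ r hm
  mul_mem_right := by
    intro b x hx
    induction hx using Submodule.span_induction with
    | mem m hm => obtain ⟨x, y, rfl⟩ := hm
                  exact Submodule.subset_span ⟨x, y * b, by noncomm_ring⟩
    | zero => simpa using Submodule.zero_mem _
    | add m n _ _ hm hn => simpa [add_mul] using Submodule.add_mem _ hm hn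
    | smul r m _ hm => simpa [Algebra.smul_mul_assoc] using Submodule.smul_mem _ r hm
  graded' := by
    intro k x hx
    induction hx using Submodule.span_induction with
    | mem m hm =>
        obtain ⟨x, y, rfl⟩ := hm
        have hterm : ∀ (p q : ZMod 2),
            ((decompose 𝒜 ((decompose 𝒜 x p : A) * a * (decompose 𝒜 y q : A)) k : A)) ∈
              Submodule.span φ {z : A | ∃ x y : A, z = x * a * y} := by
          intro p q
          have hmem : ((decompose 𝒜 x p : A) * a * (decompose 𝒜 y q : A)) ∈ 𝒜 (p + i + q) :=
            SetLike.mul_mem_graded (SetLike.mul_mem_graded (SetLike.coe_mem _) ha)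
              (SetLike.coe_mem _)
          by_cases hk : p + i + q = k
          · rw [← hk, DirectSum.decompose_of_mem_same 𝒜 hmem]
            exact Submodule.subset_span ⟨_, _, rfl⟩
          · rw [DirectSum.decompose_of_mem_ne 𝒜 hmem hk]
            exact Submodule.zero_mem _
        have hexp : x * a * y = ((decompose 𝒜 x 0 : A) + (decompose 𝒜 x 1 : A)) * a *
            ((decompose 𝒜 y 0 : A) + (decompose 𝒜 y 1 : A)) := by rw [stp_dsplit, stp_dsplit]
        rw [hexp, add_mul, add_mul, mul_add, mul_add]
        simp only [DirectSum.decompose_add, DirectSum.add_apply, Submodule.coe_add]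
        exact Submodule.add_mem _ (Submodule.add_mem _ (hterm 0 0) (hterm 0 1))
          (Submodule.add_mem _ (hterm 1 0) (hterm 1 1))
    | zero => simpa using Submodule.zero_mem _
    | add m n _ _ hm hn => simpa using Submodule.add_mem _ hm hn
    | smul r m _ hm => simpa [DirectSum.smul_apply, Submodule.coe_smul] using Submodule.smul_mem _ r hm

theorem stp_P0f (hprime : SuperPrime 𝒜) {a b : A} {i j : ZMod 2} (ha : a ∈ 𝒜 i) (hb : b ∈ 𝒜 j)
    (h : ∀ x : A, a * x * b = 0) : a = 0 ∨ b = 0 := by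
  have hgen : ∀ (x y : A), ∀ n ∈ (stp_genIdeal 𝒜 b hb).carrier, (x * a * y) * n = 0 := by
    intro x y n hn
    induction hn using Submodule.span_induction with
    | mem n hn =>
        obtain ⟨x', y', rfl⟩ := hn
        have h0 : a * (y * x') * b = 0 := h _
        have he : x * a * y * (x' * b * y') = x * (a * (y * x') * b * y') := by noncomm_ring
        rw [he, h0, zero_mul, mul_zero]
    | zero => simp
    | add m n _ _ hm hn => rw [mul_add, hm, hn, add_zero]
    | smul r m _ hm => rw [Algebra.mul_smul_comm, hm, smul_zero]
  have hz : ∀ m ∈ (stp_genIdeal 𝒜 a ha).carrier, ∀ n ∈ (stp_genIdeal 𝒜 b hb).carrier, m * n = 0 := by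
    intro m hm n hn
    induction hm using Submodule.span_induction with
    | mem m hm =>
        obtain ⟨x, y, rfl⟩ := hm
        exact hgen x y n hn
    | zero => simp
    | add p q _ _ hp hq => rw [add_mul, hp, hq, add_zero]
    | smul r p _ hp => rw [Algebra.smul_mul_assoc, hp, smul_zero]
  rcases hprime _ _ hz with h' | h'
  · left
    have : a ∈ (stp_genIdeal 𝒜 a ha).carrier := Submodule.subset_span ⟨1, 1, by simp⟩
    rw [h'] at this; simpa using this
  · right
    have : b ∈ (stp_genIdeal 𝒜 b hb).carrier := Submodule.subset_span ⟨1, 1, by simp⟩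
    rw [h'] at this; simpa using this

theorem stp_P0a_left (hprime : SuperPrime 𝒜) (I : SuperIdeal 𝒜) (hIne : I.carrier ≠ ⊥)
    {a : A} {i : ZMod 2} (ha : a ∈ 𝒜 i) (h : ∀ y ∈ I.carrier, a * y = 0) : a = 0 := by
  obtain ⟨y, hy, hyne⟩ := Submodule.ne_bot_iff _ |>.mp hIne
  have hd := stp_dsplit 𝒜 y
  have key : ∀ (k : ZMod 2), (decompose 𝒜 y k : A) ≠ 0 → a = 0 := by
    intro k hk
    have hyk : (decompose 𝒜 y k : A) ∈ I.carrier := I.graded' k y hy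
    have := stp_P0f 𝒜 hprime ha (SetLike.coe_mem ((decompose 𝒜 y) k))
      (fun x => by rw [mul_assoc]; exact h _ (I.mul_mem_left x _ hyk))
    exact this.resolve_right hk
  by_cases h0 : (decompose 𝒜 y 0 : A) = 0
  · refine key 1 ?_
    intro h1
    rw [h0, h1, add_zero] at hd
    exact hyne hd.symm
  · exact key 0 h0

theorem stp_P0a_right (hprime : SuperPrime 𝒜) (I : SuperIdeal 𝒜) (hIne : I.carrier ≠ ⊥)
    {a : A} {i : ZMod 2} (ha : a ∈ 𝒜 i) (h : ∀ y ∈ I.carrier, y * a = 0) : a = 0 := by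
  obtain ⟨y, hy, hyne⟩ := Submodule.ne_bot_iff _ |>.mp hIne
  have hd := stp_dsplit 𝒜 y
  have key : ∀ (k : ZMod 2), (decompose 𝒜 y k : A) ≠ 0 → a = 0 := by
    intro k hk
    have hyk : (decompose 𝒜 y k : A) ∈ I.carrier := I.graded' k y hy
    have := stp_P0f 𝒜 hprime (SetLike.coe_mem ((decompose 𝒜 y) k)) ha
      (fun x => h _ (I.mul_mem_right x _ hyk))
    exact this.resolve_left hk
  by_cases h0 : (decompose 𝒜 y 0 : A) = 0
  · refine key 1 ?_
    intro h1
    rw [h0, h1, add_zero] at hd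
    exact hyne hd.symm
  · exact key 0 h0

theorem stp_P0c (hprime : SuperPrime 𝒜) {c g : A} (hc : c ∈ evenCenter 𝒜) {j : ZMod 2}
    (hg : g ∈ 𝒜 j) (h : c * g = 0) : c = 0 ∨ g = 0 := by
  refine stp_P0f 𝒜 hprime hc.1 hg (fun x => ?_)
  rw [hc.2 x, mul_assoc, h, mul_zero]

theorem stp_P0b (hprime : SuperPrime 𝒜) {c : A} (hc : c ∈ evenCenter 𝒜) (h : c * c = 0) : c = 0 :=
  (stp_P0c 𝒜 hprime hc hc.1 h).elim id id

theorem stp_P0e (hprime : SuperPrime 𝒜) {s : A} (hs : s ∈ 𝒜 1)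
    (h0 : ∀ x ∈ 𝒜 0, s * x = x * s) (h1 : ∀ x ∈ 𝒜 1, s * x = -(x * s))
    (h : s * s = 0) : s = 0 := by
  refine (stp_P0f 𝒜 hprime hs hs (fun x => ?_)).elim id id
  have hd := stp_dsplit 𝒜 x
  have e0 : s * (decompose 𝒜 x 0 : A) * s = 0 := by
    rw [h0 _ (SetLike.coe_mem _), mul_assoc, h, mul_zero]
  have e1 : s * (decompose 𝒜 x 1 : A) * s = 0 := by
    rw [h1 _ (SetLike.coe_mem _), neg_mul, mul_assoc, h, mul_zero, neg_zero]
  calc s * x * s = s * ((decompose 𝒜 x 0 : A) + (decompose 𝒜 x 1 : A)) * s := by rw [hd]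
    _ = s * (decompose 𝒜 x 0 : A) * s + s * (decompose 𝒜 x 1 : A) * s := by noncomm_ring
    _ = 0 := by rw [e0, e1, add_zero]

theorem stp_SCE (hprime : SuperPrime 𝒜) (I : SuperIdeal 𝒜) (hIne : I.carrier ≠ ⊥)
    {t : A} {τ : ZMod 2} (ht : t ∈ 𝒜 τ)
    (h : ∀ (j : ZMod 2), ∀ y ∈ I.carrier, y ∈ 𝒜 j → t * y = ssign τ j • (y * t)) :
    ∀ (ξ : ZMod 2), ∀ x ∈ 𝒜 ξ, t * x = ssign τ ξ • (x * t) := by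
  intro ξ x hx
  set s := t * x - ssign τ ξ • (x * t) with hs
  have hsmem : s ∈ 𝒜 (τ + ξ) := by
    refine Submodule.sub_mem _ (SetLike.mul_mem_graded ht hx) ?_
    have hxt : x * t ∈ 𝒜 (ξ + τ) := SetLike.mul_mem_graded hx ht
    rw [add_comm ξ τ] at hxt
    exact zsmul_mem hxt _
  have hkey : ∀ (υ : ZMod 2), ∀ y ∈ I.carrier, y ∈ 𝒜 υ → s * y = 0 := by
    intro υ y hy hyυ
    have hxy : x * y ∈ I.carrier := I.mul_mem_left x y hy
    have hxyg : x * y ∈ 𝒜 (ξ + υ) := SetLike.mul_mem_graded hx hyυ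
    have e1 : t * (x * y) = ssign τ (ξ + υ) • (x * y * t) := h _ _ hxy hxyg
    have e2 : t * y = ssign τ υ • (y * t) := h _ _ hy hyυ
    have e2' : x * (t * y) = ssign τ υ • (x * y * t) := by
      rw [e2, mul_smul_comm, ← mul_assoc]
    have hexp : s * y = t * (x * y) - ssign τ ξ • (x * (t * y)) := by
      rw [hs]; noncomm_ring
    rw [hexp, e1, e2']
    simp only [smul_smul]
    rw [← stp_ssign_add, sub_self]
  have hall : ∀ y ∈ I.carrier, s * y = 0 := by
    intro y hy
    have h0 := hkey 0 _ (I.graded' 0 y hy) (SetLike.coe_mem _)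
    have h1 := hkey 1 _ (I.graded' 1 y hy) (SetLike.coe_mem _)
    calc s * y = s * ((decompose 𝒜 y 0 : A) + (decompose 𝒜 y 1 : A)) := by rw [stp_dsplit]
      _ = s * (decompose 𝒜 y 0 : A) + s * (decompose 𝒜 y 1 : A) := by rw [mul_add]
      _ = 0 := by rw [h0, h1, add_zero]
  have hs0 : s = 0 := stp_P0a_left 𝒜 hprime I hIne hsmem hall
  rw [hs] at hs0
  exact sub_eq_zero.mp hs0

/-- An even element commuting with a nonzero graded ideal is in the even centre. -/
theorem stp_CEN (hprime : SuperPrime 𝒜) (I : SuperIdeal 𝒜) (hIne : I.carrier ≠ ⊥)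
    {t : A} (ht : t ∈ 𝒜 0)
    (h : ∀ (j : ZMod 2), ∀ y ∈ I.carrier, y ∈ 𝒜 j → t * y = y * t) : t ∈ evenCenter 𝒜 := by
  have h' : ∀ (j : ZMod 2), ∀ y ∈ I.carrier, y ∈ 𝒜 j → t * y = ssign 0 j • (y * t) :=
    fun j y hy hyj => by rw [stp_ssign_zero, one_smul]; exact h j y hy hyj
  have hc := stp_SCE 𝒜 hprime I hIne ht h'
  refine ⟨ht, fun x => ?_⟩
  have e0 := hc 0 _ (SetLike.coe_mem (decompose 𝒜 x 0))
  have e1 := hc 1 _ (SetLike.coe_mem (decompose 𝒜 x 1))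
  rw [stp_ssign_zero, one_smul] at e0 e1
  calc t * x = t * ((decompose 𝒜 x 0 : A) + (decompose 𝒜 x 1 : A)) := by rw [stp_dsplit]
    _ = t * (decompose 𝒜 x 0 : A) + t * (decompose 𝒜 x 1 : A) := by rw [mul_add]
    _ = (decompose 𝒜 x 0 : A) * t + (decompose 𝒜 x 1 : A) * t := by rw [e0, e1]
    _ = ((decompose 𝒜 x 0 : A) + (decompose 𝒜 x 1 : A)) * t := by rw [add_mul]
    _ = x * t := by rw [stp_dsplit]

theorem stp_NEZ (hprime : SuperPrime 𝒜) (I : SuperIdeal 𝒜) (hIne : I.carrier ≠ ⊥) :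
    ∃ y, y ∈ I.carrier ∧ y ∈ 𝒜 0 ∧ y ≠ 0 := by
  by_contra hno
  push_neg at hno
  have hodd : ∀ x ∈ I.carrier, x ∈ 𝒜 1 := by
    intro x hx
    have h0 : (decompose 𝒜 x 0 : A) = 0 :=
      hno _ (I.graded' 0 x hx) (SetLike.coe_mem _)
    have hd := stp_dsplit 𝒜 x
    rw [h0, zero_add] at hd
    rw [← hd]; exact SetLike.coe_mem _
  have hsq : ∀ x ∈ I.carrier, ∀ y ∈ I.carrier, x * y = 0 := by
    intro x hx y hy
    refine hno _ (I.mul_mem_left x y hy) ?_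
    exact stp_memcast 𝒜 (by decide : (1 + 1 : ZMod 2) = 0)
      (SetLike.mul_mem_graded (hodd x hx) (hodd y hy))
  rcases hprime I I hsq with h | h <;> exact hIne h

end AuxSteps

/-- **(Steps 1–3 of case (a) in Theorem 2.4.)** Let `A` be a prime nontrivial superalgebra
over a commutative ring `φ` with `½ ∈ φ`, `I` a nonzero proper ideal, and `U` a graded
additive subgroup with `[U, I] ⊆ U`, `u∘v ∈ Z` for `u, v ∈ U₀` and `u∘v = 0` for
`u, v ∈ U₁`. If `[[[U,I],[U,I]], I] = 0`, then `[U,I]₀ ⊆ Z`, `[U₀, I₀] = 0`, and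
`u₁v₁ ∈ Z` for all `u₁, v₁ ∈ U₁`. -/
theorem steps_one_two_three
    {φ A : Type*} [CommRing φ] [Invertible (2 : φ)] [Ring A] [Algebra φ A]
    (𝒜 : ZMod 2 → Submodule φ A) [GradedAlgebra 𝒜]
    (hprime : SuperPrime 𝒜) (hnontriv : 𝒜 1 ≠ ⊥)
    (I : SuperIdeal 𝒜) (hIne : I.carrier ≠ ⊥) (hIproper : I.carrier ≠ ⊤)
    (U : AddSubgroup A)
    (hUgr : ∀ (i : ZMod 2), ∀ x ∈ U, ((DirectSum.decompose 𝒜 x) i : A) ∈ U)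
    (hUI : ∀ (i j : ZMod 2), ∀ u ∈ U, u ∈ 𝒜 i → ∀ y ∈ I.carrier, y ∈ 𝒜 j →
      sbr i j u y ∈ U)
    (hU0 : ∀ u v : A, u ∈ U → u ∈ 𝒜 0 → v ∈ U → v ∈ 𝒜 0 → scirc 0 0 u v ∈ evenCenter 𝒜)
    (hU1 : ∀ u v : A, u ∈ U → u ∈ 𝒜 1 → v ∈ U → v ∈ 𝒜 1 → scirc 1 1 u v = 0)
    (hyp : superBrAdd 𝒜
        (↑(superBrAdd 𝒜 (↑(superBrAdd 𝒜 (↑U) (↑I.carrier)))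
            (↑(superBrAdd 𝒜 (↑U) (↑I.carrier)))) : Set A)
        (↑I.carrier) = ⊥) :
    (∀ x ∈ superBrAdd 𝒜 (↑U) (↑I.carrier), x ∈ 𝒜 0 → x ∈ evenCenter 𝒜) ∧
    (∀ u ∈ U, u ∈ 𝒜 0 → ∀ y ∈ I.carrier, y ∈ 𝒜 0 → u * y = y * u) ∧
    (∀ u v : A, u ∈ U → u ∈ 𝒜 1 → v ∈ U → v ∈ 𝒜 1 → u * v ∈ evenCenter 𝒜) := by
  classical
  set Wg := superBrAdd 𝒜 (↑U) (↑I.carrier) with hWdef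
  -- membership in 𝒜 of superbrackets
  have hsbrmem : ∀ (i j : ZMod 2) (x y : A), x ∈ 𝒜 i → y ∈ 𝒜 j → sbr i j x y ∈ 𝒜 (i + j) := by
    intro i j x y hx hy
    refine Submodule.sub_mem _ (SetLike.mul_mem_graded hx hy) ?_
    have : y * x ∈ 𝒜 (j + i) := SetLike.mul_mem_graded hy hx
    rw [add_comm j i] at this
    exact zsmul_mem this _
  -- generators of W
  have hgenW : ∀ (i j : ZMod 2) (u y : A), u ∈ U → u ∈ 𝒜 i → y ∈ I.carrier → y ∈ 𝒜 j →
      sbr i j u y ∈ Wg := by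
    intro i j u y hu hui hy hyj
    exact AddSubgroup.subset_closure ⟨i, j, u, y, hu, hui, hy, hyj, rfl⟩
  have hWU : ∀ x ∈ Wg, x ∈ U := by
    have hle : Wg ≤ U := by
      rw [hWdef]
      refine (AddSubgroup.closure_le U).mpr ?_
      rintro z ⟨i, j, u, y, hu, hui, hy, hyj, rfl⟩
      exact hUI i j u hu hui y hy hyj
    exact fun x hx => hle hx
  have hWI : ∀ x ∈ Wg, x ∈ I.carrier := by
    have hle : Wg ≤ (I.carrier).toAddSubgroup := by
      rw [hWdef]
      refine (AddSubgroup.closure_le _).mpr ?_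
      rintro z ⟨i, j, u, y, hu, hui, hy, hyj, rfl⟩
      have h1 : u * y ∈ I.carrier := I.mul_mem_left u y hy
      have h2 : y * u ∈ I.carrier := I.mul_mem_right u y hy
      exact Submodule.sub_mem _ h1 (zsmul_mem h2 _)
    exact fun x hx => hle hx
  -- generators of [W,W]
  have hgg : ∀ (i j : ZMod 2) (w w' : A), w ∈ Wg → w ∈ 𝒜 i → w' ∈ Wg → w' ∈ 𝒜 j →
      sbr i j w w' ∈ superBrAdd 𝒜 (↑Wg) (↑Wg) := by
    intro i j w w' hw hwi hw' hw'j
    exact AddSubgroup.subset_closure ⟨i, j, w, w', hw, hwi, hw', hw'j, rfl⟩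
  -- the hypothesis kills all superbrackets of homogeneous [W,W]-elements with I
  have hnil : ∀ (i j : ZMod 2) (a y : A), a ∈ superBrAdd 𝒜 (↑Wg) (↑Wg) → a ∈ 𝒜 i →
      y ∈ I.carrier → y ∈ 𝒜 j → sbr i j a y = 0 := by
    intro i j a y ha hai hy hyj
    have hm : sbr i j a y ∈ superBrAdd 𝒜 (↑(superBrAdd 𝒜 (↑Wg) (↑Wg))) (↑I.carrier) :=
      AddSubgroup.subset_closure ⟨i, j, a, y, ha, hai, hy, hyj, rfl⟩
    rw [hyp] at hm
    exact AddSubgroup.mem_bot.mp hm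
  -- even elements of [W,W] are central
  have hCENW : ∀ t ∈ superBrAdd 𝒜 (↑Wg) (↑Wg), t ∈ 𝒜 0 → t ∈ evenCenter 𝒜 := by
    intro t ht ht0
    refine stp_CEN 𝒜 hprime I hIne ht0 (fun j y hy hyj => ?_)
    have h0 := hnil 0 j t y ht ht0 hy hyj
    unfold sbr at h0
    rw [stp_ssign_zero, one_smul] at h0
    exact sub_eq_zero.mp h0
  -- products of even elements of W are central
  have hPZ0 : ∀ w w' : A, w ∈ Wg → w ∈ 𝒜 0 → w' ∈ Wg → w' ∈ 𝒜 0 →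
      w * w' ∈ evenCenter 𝒜 := by
    intro w w' hw hw0 hw' hw'0
    have ht := hgg 0 0 w w' hw hw0 hw' hw'0
    have ht0 : sbr 0 0 w w' ∈ 𝒜 0 :=
      stp_memcast 𝒜 (by decide : (0 + 0 : ZMod 2) = 0) (hsbrmem 0 0 w w' hw0 hw'0)
    have h1 : w * w' - w' * w ∈ evenCenter 𝒜 := by
      have := hCENW _ ht ht0
      rwa [stp_sbr00] at this
    have h2 : w * w' + w' * w ∈ evenCenter 𝒜 := by
      have := hU0 w w' (hWU w hw) hw0 (hWU w' hw') hw'0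
      rwa [stp_scirc00] at this
    refine stp_Zhalf 𝒜 ?_
    have e : w * w' + w * w' = (w * w' - w' * w) + (w * w' + w' * w) := by abel
    rw [e]
    exact stp_Zadd 𝒜 h1 h2
  -- ###### Step 1: Wg ∩ 𝒜 0 ⊆ Z ######
  have hstep1 : ∀ c ∈ Wg, c ∈ 𝒜 0 → c ∈ evenCenter 𝒜 := by
    intro c hcW hc0
    have hcU : c ∈ U := hWU c hcW
    have hc2Z : c * c ∈ evenCenter 𝒜 := hPZ0 c c hcW hc0 hcW hc0
    have hc2c : ∀ x : A, (c * c) * x = x * (c * c) := hc2Z.2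
    have hx1 : ∀ z : A, c * z * (c * c) = c * c * (c * z) := fun z => (hc2c (c * z)).symm
    have hx2 : ∀ z : A, z * (c * c) = c * c * z := fun z => (hc2c z).symm
    -- brackets with even ideal elements
    have hczW : ∀ z, z ∈ I.carrier → z ∈ 𝒜 0 → (c * z - z * c ∈ Wg ∧ c * z - z * c ∈ 𝒜 0) := by
      intro z hz hz0
      constructor
      · have := hgenW 0 0 c z hcU hc0 hz hz0; rwa [stp_sbr00] at this
      · have := stp_memcast 𝒜 (by decide : (0 + 0 : ZMod 2) = 0) (hsbrmem 0 0 c z hc0 hz0)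
        rwa [stp_sbr00] at this
    have hmZ0 : ∀ z, z ∈ I.carrier → z ∈ 𝒜 0 → c * (c * z - z * c) ∈ evenCenter 𝒜 := by
      intro z hz hz0
      exact hPZ0 c _ hcW hc0 (hczW z hz hz0).1 (hczW z hz hz0).2
    -- the key identity c²[z,c] = 0, even case
    have hkey0 : ∀ z, z ∈ I.carrier → z ∈ 𝒜 0 → c * c * z * c = c * c * c * z := by
      intro z hz hz0
      have hm := (hmZ0 z hz hz0).2 c
      have hexp0 : (c * (c * z - z * c)) * c + c * z * (c * c) = c * c * z * c := by
        noncomm_ring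
      rw [hx1 z] at hexp0
      have hA : (c * (c * z - z * c)) * c = c * c * z * c - c * c * (c * z) :=
        eq_sub_of_add_eq hexp0
      have hexp0' : c * ((c * (c * z - z * c))) + c * c * z * c = c * c * (c * z) := by
        noncomm_ring
      have hB : c * ((c * (c * z - z * c))) = c * c * (c * z) - c * c * z * c :=
        eq_sub_of_add_eq hexp0'
      rw [hA, hB] at hm
      have := stp_half_sub (φ := φ) hm
      rw [this]
      noncomm_ring
    -- brackets with odd ideal elements, the element T and its supercommuting property
    have hqmem : ∀ z, z ∈ I.carrier → z ∈ 𝒜 1 → (c * z - z * c ∈ Wg ∧ c * z - z * c ∈ 𝒜 1) := by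
      intro z hz hz1
      constructor
      · have := hgenW 0 1 c z hcU hc0 hz hz1; rwa [stp_sbr01] at this
      · have := stp_memcast 𝒜 (by decide : (0 + 1 : ZMod 2) = 1) (hsbrmem 0 1 c z hc0 hz1)
        rwa [stp_sbr01] at this
    have hTsc : ∀ z, z ∈ I.carrier → z ∈ 𝒜 1 →
        ∀ (ξ : ZMod 2), ∀ x ∈ 𝒜 ξ,
          (c * (c * z - z * c) - (c * z - z * c) * c) * x =
            ssign 1 ξ • (x * (c * (c * z - z * c) - (c * z - z * c) * c)) := by
      intro z hz hz1
      have hq := hqmem z hz hz1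
      have hTW : c * (c * z - z * c) - (c * z - z * c) * c ∈ superBrAdd 𝒜 (↑Wg) (↑Wg) := by
        have := hgg 0 1 c (c * z - z * c) hcW hc0 hq.1 hq.2
        rwa [stp_sbr01] at this
      have hTmem : c * (c * z - z * c) - (c * z - z * c) * c ∈ 𝒜 1 := by
        have := stp_memcast 𝒜 (by decide : (0 + 1 : ZMod 2) = 1) (hsbrmem 0 1 c _ hc0 hq.2)
        rwa [stp_sbr01] at this
      refine stp_SCE 𝒜 hprime I hIne hTmem (fun j y hy hyj => ?_)
      have h0 := hnil 1 j _ y hTW hTmem hy hyj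
      unfold sbr at h0
      exact sub_eq_zero.mp h0
    -- the key identity, odd case
    have hkey1 : ∀ z, z ∈ I.carrier → z ∈ 𝒜 1 → c * c * z * c = c * c * c * z := by
      intro z hz hz1
      have htc := hTsc z hz hz1 0 c hc0
      rw [show ssign 1 0 = 1 from by decide, one_smul] at htc
      have hexpA : (c * (c * z - z * c) - (c * z - z * c) * c) * c +
          (c * z * (c * c) + c * z * (c * c)) = c * c * z * c + z * (c * c) * c := by
        noncomm_ring
      rw [hx1 z, hx2 z] at hexpA
      have hA : (c * (c * z - z * c) - (c * z - z * c) * c) * c =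
          (c * c * z * c + c * c * z * c) - (c * c * (c * z) + c * c * (c * z)) :=
        eq_sub_of_add_eq hexpA
      have hexpB : c * (c * (c * z - z * c) - (c * z - z * c) * c) +
          (c * c * z * c + c * c * z * c) = c * c * (c * z) + c * z * (c * c) := by
        noncomm_ring
      rw [hx1 z] at hexpB
      have hB : c * (c * (c * z - z * c) - (c * z - z * c) * c) =
          (c * c * (c * z) + c * c * (c * z)) - (c * c * z * c + c * c * z * c) :=
        eq_sub_of_add_eq hexpB
      rw [hA, hB] at htc
      have h4 := stp_half_sub (φ := φ) htc
      have h5 := stp_half_eq (φ := φ) h4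
      rw [h5]
      noncomm_ring
    -- key identity for all ideal elements
    have hkeyAll : ∀ z ∈ I.carrier, c * c * z * c = c * c * c * z := by
      intro z hz
      have e0 := hkey0 _ (I.graded' 0 z hz) (SetLike.coe_mem _)
      have e1 := hkey1 _ (I.graded' 1 z hz) (SetLike.coe_mem _)
      have hzz : (decompose 𝒜 z 0 : A) + (decompose 𝒜 z 1 : A) = z := stp_dsplit 𝒜 z
      calc c * c * z * c
          = c * c * ((decompose 𝒜 z 0 : A) + (decompose 𝒜 z 1 : A)) * c := by rw [hzz]
        _ = c * c * (decompose 𝒜 z 0 : A) * c + c * c * (decompose 𝒜 z 1 : A) * c := by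
            noncomm_ring
        _ = c * c * c * (decompose 𝒜 z 0 : A) + c * c * c * (decompose 𝒜 z 1 : A) := by
            rw [e0, e1]
        _ = c * c * c * ((decompose 𝒜 z 0 : A) + (decompose 𝒜 z 1 : A)) := by noncomm_ring
        _ = c * c * c * z := by rw [hzz]
    -- extend: c*c kills all commutators with c
    have hHX : ∀ (ξ : ZMod 2), ∀ x ∈ 𝒜 ξ, c * c * (x * c) - c * c * (c * x) = 0 := by
      intro ξ x hx
      have hzg : ∀ z ∈ I.carrier, z * (c * c * (x * c) - c * c * (c * x)) = 0 := by
        intro z hz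
        have hA := hkeyAll (z * x) (I.mul_mem_right x z hz)
        have hB := hkeyAll z hz
        calc z * (c * c * (x * c) - c * c * (c * x))
            = (z * (c * c)) * (x * c) - (z * (c * c)) * (c * x) := by noncomm_ring
          _ = ((c * c) * z) * (x * c) - ((c * c) * z) * (c * x) := by rw [hx2 z]
          _ = c * c * (z * x) * c - (c * c * z * c) * x := by noncomm_ring
          _ = c * c * c * (z * x) - (c * c * c * z) * x := by rw [hA, hB]
          _ = 0 := by noncomm_ring
      have hgmem : c * c * (x * c) - c * c * (c * x) ∈ 𝒜 ξ := by
        have hcc : c * c ∈ 𝒜 0 :=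
          stp_memcast 𝒜 (by decide : (0 + 0 : ZMod 2) = 0) (SetLike.mul_mem_graded hc0 hc0)
        have m1 : x * c ∈ 𝒜 ξ :=
          stp_memcast 𝒜 (by rw [add_zero] : ξ + 0 = ξ) (SetLike.mul_mem_graded hx hc0)
        have m2 : c * x ∈ 𝒜 ξ :=
          stp_memcast 𝒜 (by rw [zero_add] : 0 + ξ = ξ) (SetLike.mul_mem_graded hc0 hx)
        refine Submodule.sub_mem _ ?_ ?_
        · exact stp_memcast 𝒜 (by rw [zero_add] : 0 + ξ = ξ) (SetLike.mul_mem_graded hcc m1)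
        · exact stp_memcast 𝒜 (by rw [zero_add] : 0 + ξ = ξ) (SetLike.mul_mem_graded hcc m2)
      exact stp_P0a_right 𝒜 hprime I hIne hgmem hzg
    by_cases hcc0 : c * c = 0
    · -- nilpotent case: show c = 0
      have h3a : ∀ z, z ∈ I.carrier → z ∈ 𝒜 0 → c * z * c = 0 := by
        intro z hz hz0
        have hmZ := hmZ0 z hz hz0
        have hval : c * (c * z - z * c) = -(c * z * c) := by
          have he : c * (c * z - z * c) = (c * c) * z - c * z * c := by noncomm_ring
          rw [he, hcc0, zero_mul, zero_sub]
        rw [hval] at hmZ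
        have hsZ : c * z * c ∈ evenCenter 𝒜 := by
          have := stp_Zneg 𝒜 hmZ; rwa [neg_neg] at this
        refine stp_P0b 𝒜 hprime hsZ ?_
        have he2 : (c * z * c) * (c * z * c) = c * z * ((c * c) * (z * c)) := by noncomm_ring
        rw [he2, hcc0, zero_mul, mul_zero]
      have h3b : ∀ z, z ∈ I.carrier → z ∈ 𝒜 1 → c * z * c = 0 := by
        intro z hz hz1
        have hsc := hTsc z hz hz1
        have hTval : c * (c * z - z * c) - (c * z - z * c) * c =
            -(c * z * c + c * z * c) := by
          have he : c * (c * z - z * c) - (c * z - z * c) * c =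
              (c * c) * z + z * (c * c) - (c * z * c + c * z * c) := by noncomm_ring
          rw [he, hcc0, zero_mul, mul_zero, add_zero, zero_sub]
        have hsmem : c * z * c ∈ 𝒜 1 := by
          have m1 : c * z ∈ 𝒜 1 :=
            stp_memcast 𝒜 (by decide : (0 + 1 : ZMod 2) = 1) (SetLike.mul_mem_graded hc0 hz1)
          exact stp_memcast 𝒜 (by decide : (1 + 0 : ZMod 2) = 1)
            (SetLike.mul_mem_graded m1 hc0)
        have hss : (c * z * c) * (c * z * c) = 0 := by
          have he2 : (c * z * c) * (c * z * c) = c * z * ((c * c) * (z * c)) := by noncomm_ring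
          rw [he2, hcc0, zero_mul, mul_zero]
        refine stp_P0e 𝒜 hprime hsmem ?_ ?_ hss
        · intro x hx
          have h := hsc 0 x hx
          rw [hTval, show ssign 1 0 = 1 from by decide, one_smul] at h
          have h' : (c * z * c) * x + (c * z * c) * x = x * (c * z * c) + x * (c * z * c) := by
            have hl : -((c * z * c) * x + (c * z * c) * x) =
                -(x * (c * z * c) + x * (c * z * c)) := by
              calc -((c * z * c) * x + (c * z * c) * x)
                  = (-(c * z * c + c * z * c)) * x := by noncomm_ring
                _ = x * (-(c * z * c + c * z * c)) := h
                _ = -(x * (c * z * c) + x * (c * z * c)) := by noncomm_ring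
            exact neg_inj.mp hl
          exact stp_half_eq (φ := φ) h'
        · intro x hx
          have h := hsc 1 x hx
          rw [hTval, show ssign 1 1 = -1 from by decide] at h
          have h' : (c * z * c) * x + (c * z * c) * x =
              (-(x * (c * z * c))) + (-(x * (c * z * c))) := by
            have hl : -((c * z * c) * x + (c * z * c) * x) =
                -((-(x * (c * z * c))) + (-(x * (c * z * c)))) := by
              calc -((c * z * c) * x + (c * z * c) * x)
                  = (-(c * z * c + c * z * c)) * x := by noncomm_ring
                _ = (-1 : ℤ) • (x * (-(c * z * c + c * z * c))) := h
                _ = -((-(x * (c * z * c))) + (-(x * (c * z * c)))) := by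
                    rw [neg_one_zsmul]; noncomm_ring
            exact neg_inj.mp hl
          exact stp_half_eq (φ := φ) h'
      have h3 : ∀ z ∈ I.carrier, c * z * c = 0 := by
        intro z hz
        have e0 := h3a _ (I.graded' 0 z hz) (SetLike.coe_mem _)
        have e1 := h3b _ (I.graded' 1 z hz) (SetLike.coe_mem _)
        have hzz : (decompose 𝒜 z 0 : A) + (decompose 𝒜 z 1 : A) = z := stp_dsplit 𝒜 z
        calc c * z * c = c * ((decompose 𝒜 z 0 : A) + (decompose 𝒜 z 1 : A)) * c := by rw [hzz]
          _ = c * (decompose 𝒜 z 0 : A) * c + c * (decompose 𝒜 z 1 : A) * c := by noncomm_ring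
          _ = 0 := by rw [e0, e1, add_zero]
      have hsand : ∀ z ∈ I.carrier, ∀ z' ∈ I.carrier, ∀ x : A, (c * z) * x * (z' * c) = 0 := by
        intro z hz z' hz' x
        have hin : z * x * z' ∈ I.carrier := I.mul_mem_right z' _ (I.mul_mem_right x z hz)
        have := h3 _ hin
        calc (c * z) * x * (z' * c) = c * (z * x * z') * c := by noncomm_ring
          _ = 0 := this
      have hc_eq_0 : c = 0 := by
        by_cases hcz : ∀ z ∈ I.carrier, c * z = 0
        · exact stp_P0a_left 𝒜 hprime I hIne hc0 hcz
        · push_neg at hcz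
          obtain ⟨z, hz, hne⟩ := hcz
          have hzz : (decompose 𝒜 z 0 : A) + (decompose 𝒜 z 1 : A) = z := stp_dsplit 𝒜 z
          have hcomp : ∃ (k : ZMod 2), c * ((decompose 𝒜 z k : A)) ≠ 0 := by
            by_contra hno
            push_neg at hno
            refine hne ?_
            calc c * z = c * ((decompose 𝒜 z 0 : A) + (decompose 𝒜 z 1 : A)) := by rw [hzz]
              _ = c * (decompose 𝒜 z 0 : A) + c * (decompose 𝒜 z 1 : A) := by rw [mul_add]
              _ = 0 := by rw [hno 0, hno 1, add_zero]
          obtain ⟨k, hk⟩ := hcomp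
          have hzk : (decompose 𝒜 z k : A) ∈ I.carrier := I.graded' k z hz
          have hczk_mem : c * (decompose 𝒜 z k : A) ∈ 𝒜 (0 + k) :=
            SetLike.mul_mem_graded hc0 (SetLike.coe_mem _)
          have hall : ∀ z' ∈ I.carrier, z' * c = 0 := by
            intro z' hz'
            have hcomp' : ∀ (k' : ZMod 2), (decompose 𝒜 z' k' : A) * c = 0 := by
              intro k'
              have hzk' : (decompose 𝒜 z' k' : A) ∈ I.carrier := I.graded' k' z' hz'
              have hm' : (decompose 𝒜 z' k' : A) * c ∈ 𝒜 (k' + 0) :=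
                SetLike.mul_mem_graded (SetLike.coe_mem _) hc0
              have hd := stp_P0f 𝒜 hprime hczk_mem hm'
                (fun x => hsand _ hzk _ hzk' x)
              exact hd.resolve_left hk
            have hzz' : (decompose 𝒜 z' 0 : A) + (decompose 𝒜 z' 1 : A) = z' :=
              stp_dsplit 𝒜 z'
            calc z' * c = ((decompose 𝒜 z' 0 : A) + (decompose 𝒜 z' 1 : A)) * c := by rw [hzz']
              _ = (decompose 𝒜 z' 0 : A) * c + (decompose 𝒜 z' 1 : A) * c := by rw [add_mul]
              _ = 0 := by rw [hcomp' 0, hcomp' 1, add_zero]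
          exact stp_P0a_right 𝒜 hprime I hIne hc0 hall
      rw [hc_eq_0]
      exact stp_Zzero 𝒜
    · -- c*c ≠ 0: c is central
      refine ⟨hc0, fun x => ?_⟩
      have hcomm : ∀ (ξ : ZMod 2), ∀ w ∈ 𝒜 ξ, c * w = w * c := by
        intro ξ w hw
        have hmem : w * c - c * w ∈ 𝒜 ξ := by
          refine Submodule.sub_mem _ ?_ ?_
          · exact stp_memcast 𝒜 (by rw [add_zero] : ξ + 0 = ξ) (SetLike.mul_mem_graded hw hc0)
          · exact stp_memcast 𝒜 (by rw [zero_add] : 0 + ξ = ξ) (SetLike.mul_mem_graded hc0 hw)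
        have hzero : (c * c) * (w * c - c * w) = 0 := by
          have := hHX ξ w hw
          calc (c * c) * (w * c - c * w) = c * c * (w * c) - c * c * (c * w) := by noncomm_ring
            _ = 0 := this
        have := stp_P0c 𝒜 hprime hc2Z hmem hzero
        have hwc := this.resolve_left hcc0
        exact (sub_eq_zero.mp hwc).symm
      have e0 := hcomm 0 _ (SetLike.coe_mem (decompose 𝒜 x 0))
      have e1 := hcomm 1 _ (SetLike.coe_mem (decompose 𝒜 x 1))
      have hzz : (decompose 𝒜 x 0 : A) + (decompose 𝒜 x 1 : A) = x := stp_dsplit 𝒜 x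
      calc c * x = c * ((decompose 𝒜 x 0 : A) + (decompose 𝒜 x 1 : A)) := by rw [hzz]
        _ = c * (decompose 𝒜 x 0 : A) + c * (decompose 𝒜 x 1 : A) := by rw [mul_add]
        _ = (decompose 𝒜 x 0 : A) * c + (decompose 𝒜 x 1 : A) * c := by rw [e0, e1]
        _ = ((decompose 𝒜 x 0 : A) + (decompose 𝒜 x 1 : A)) * c := by rw [add_mul]
        _ = x * c := by rw [hzz]
  -- ###### Step 2 core lemma ######
  have hL2 : ∀ a : A, a ∈ 𝒜 0 →
      (∀ y ∈ I.carrier, y ∈ 𝒜 0 → a * y - y * a ∈ evenCenter 𝒜) →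
      ∀ z ∈ I.carrier, z ∈ 𝒜 0 → a * z = z * a := by
    intro a ha0 hZ z hz hz0
    by_cases hc : a * z - z * a = 0
    · exact sub_eq_zero.mp hc
    exfalso
    have hcZ : a * z - z * a ∈ evenCenter 𝒜 := hZ z hz hz0
    -- (i): (a*z - z*a) * (y*z - z*y) = 0 for homogeneous even y ∈ I
    have hi : ∀ y, y ∈ I.carrier → y ∈ 𝒜 0 → (a * z - z * a) * (y * z - z * y) = 0 := by
      intro y hy hy0
      have hyz : y * z ∈ I.carrier := I.mul_mem_right z y hy
      have hyz0 : y * z ∈ 𝒜 0 :=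
        stp_memcast 𝒜 (by decide : (0 + 0 : ZMod 2) = 0) (SetLike.mul_mem_graded hy0 hz0)
      have hdZ : a * (y * z) - (y * z) * a ∈ evenCenter 𝒜 := hZ _ hyz hyz0
      have hcyZ : a * y - y * a ∈ evenCenter 𝒜 := hZ y hy hy0
      have hid : a * (y * z) - (y * z) * a = (a * y - y * a) * z + y * (a * z - z * a) := by
        noncomm_ring
      have hdz : (a * (y * z) - (y * z) * a) * z = z * (a * (y * z) - (y * z) * a) := hdZ.2 z
      have key2 : ((a * y - y * a) * z + y * (a * z - z * a)) * z -
          z * ((a * y - y * a) * z + y * (a * z - z * a)) =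
          (a * z - z * a) * (y * z - z * y) := by
        calc ((a * y - y * a) * z + y * (a * z - z * a)) * z -
            z * ((a * y - y * a) * z + y * (a * z - z * a))
            = (y * ((a * z - z * a) * z) - z * (y * (a * z - z * a))) +
              ((a * y - y * a) * z * z - (z * (a * y - y * a)) * z) := by noncomm_ring
          _ = (y * (z * (a * z - z * a)) - z * (y * (a * z - z * a))) +
              ((a * y - y * a) * z * z - ((a * y - y * a) * z) * z) := by
              rw [hcZ.2 z, ← hcyZ.2 z]
          _ = (y * z - z * y) * (a * z - z * a) := by noncomm_ring
          _ = (a * z - z * a) * (y * z - z * y) := (hcZ.2 _).symm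
      rw [hid] at hdz
      rw [← key2, hdz, sub_self]
    -- (ii): all of I₀ commutes with z
    have hIcomm : ∀ y, y ∈ I.carrier → y ∈ 𝒜 0 → y * z = z * y := by
      intro y hy hy0
      have hmem : y * z - z * y ∈ 𝒜 0 := by
        refine Submodule.sub_mem _ ?_ ?_
        · exact stp_memcast 𝒜 (by decide : (0 + 0 : ZMod 2) = 0)
            (SetLike.mul_mem_graded hy0 hz0)
        · exact stp_memcast 𝒜 (by decide : (0 + 0 : ZMod 2) = 0)
            (SetLike.mul_mem_graded hz0 hy0)
      have := stp_P0c 𝒜 hprime hcZ hmem (hi y hy hy0)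
      exact sub_eq_zero.mp (this.resolve_left hc)
    -- (iii): (a*z - z*a) * I₀ = 0
    have hcy0 : ∀ y, y ∈ I.carrier → y ∈ 𝒜 0 → (a * z - z * a) * y = 0 := by
      intro y hy hy0
      have hay : a * y ∈ I.carrier := I.mul_mem_left a y hy
      have hay0 : a * y ∈ 𝒜 0 :=
        stp_memcast 𝒜 (by decide : (0 + 0 : ZMod 2) = 0) (SetLike.mul_mem_graded ha0 hy0)
      calc (a * z - z * a) * y = a * (z * y) - z * (a * y) := by noncomm_ring
        _ = a * (y * z) - z * (a * y) := by rw [← hIcomm y hy hy0]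
        _ = (a * y) * z - z * (a * y) := by noncomm_ring
        _ = z * (a * y) - z * (a * y) := by rw [hIcomm (a * y) hay hay0]
        _ = 0 := sub_self _
    -- (iv): contradiction via a nonzero even element of I
    obtain ⟨y0, hy0I, hy0g, hy0ne⟩ := stp_NEZ 𝒜 hprime I hIne
    have := stp_P0f 𝒜 hprime hcZ.1 hy0g (fun x => by
      rw [hcZ.2 x, mul_assoc, hcy0 y0 hy0I hy0g, mul_zero])
    rcases this with h | h
    · exact hc h
    · exact hy0ne h
  -- ###### Goal 2 ######
  have hgoal2 : ∀ u ∈ U, u ∈ 𝒜 0 → ∀ y ∈ I.carrier, y ∈ 𝒜 0 → u * y = y * u := by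
    intro u hu hu0 y hy hy0
    refine hL2 u hu0 (fun y' hy' hy'0 => ?_) y hy hy0
    have hw : u * y' - y' * u ∈ Wg := by
      have := hgenW 0 0 u y' hu hu0 hy' hy'0; rwa [stp_sbr00] at this
    have hw0 : u * y' - y' * u ∈ 𝒜 0 := by
      have := stp_memcast 𝒜 (by decide : (0 + 0 : ZMod 2) = 0) (hsbrmem 0 0 u y' hu0 hy'0)
      rwa [stp_sbr00] at this
    exact hstep1 _ hw hw0
  -- ###### Goal 3 ######
  have hPZodd : ∀ u ∈ U, u ∈ 𝒜 1 → ∀ z ∈ I.carrier, z ∈ 𝒜 1 →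
      u * z + z * u ∈ evenCenter 𝒜 := by
    intro u hu hu1 z hz hz1
    have hw : u * z + z * u ∈ Wg := by
      have := hgenW 1 1 u z hu hu1 hz hz1; rwa [stp_sbr11] at this
    have hw0 : u * z + z * u ∈ 𝒜 0 := by
      have := stp_memcast 𝒜 (by decide : (1 + 1 : ZMod 2) = 0) (hsbrmem 1 1 u z hu1 hz1)
      rwa [stp_sbr11] at this
    exact hstep1 _ hw hw0
  have hstar2 : ∀ u ∈ U, u ∈ 𝒜 1 → ∀ w ∈ Wg, w ∈ 𝒜 1 → u * w ∈ evenCenter 𝒜 := by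
    intro u hu hu1 w hw hw1
    have h1 : u * w + w * u ∈ evenCenter 𝒜 := hPZodd u hu hu1 w (hWI w hw) hw1
    have h2 : u * w - w * u = 0 := by
      have := hU1 u w hu hu1 (hWU w hw) hw1; rwa [stp_scirc11] at this
    refine stp_Zhalf 𝒜 ?_
    have e : u * w + u * w = (u * w + w * u) + (u * w - w * u) := by abel
    rw [e, h2, add_zero]
    exact h1
  have hgoal3 : ∀ u v : A, u ∈ U → u ∈ 𝒜 1 → v ∈ U → v ∈ 𝒜 1 →
      u * v ∈ evenCenter 𝒜 := by
    intro u v hu hu1 hv hv1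
    have huv_mem : u * v ∈ 𝒜 0 :=
      stp_memcast 𝒜 (by decide : (1 + 1 : ZMod 2) = 0) (SetLike.mul_mem_graded hu1 hv1)
    have huv : u * v = v * u := by
      have := hU1 u v hu hu1 hv hv1; rw [stp_scirc11] at this
      exact sub_eq_zero.mp this
    -- commutation with even part of I via hL2
    have heven : ∀ z ∈ I.carrier, z ∈ 𝒜 0 → (u * v) * z = z * (u * v) := by
      refine hL2 (u * v) huv_mem (fun y hy hy0 => ?_)
      have hq1W : v * y - y * v ∈ Wg := by
        have := hgenW 1 0 v y hv hv1 hy hy0; rwa [stp_sbr10] at this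
      have hq1g : v * y - y * v ∈ 𝒜 1 := by
        have := stp_memcast 𝒜 (by decide : (1 + 0 : ZMod 2) = 1) (hsbrmem 1 0 v y hv1 hy0)
        rwa [stp_sbr10] at this
      have hq2W : u * y - y * u ∈ Wg := by
        have := hgenW 1 0 u y hu hu1 hy hy0; rwa [stp_sbr10] at this
      have hq2g : u * y - y * u ∈ 𝒜 1 := by
        have := stp_memcast 𝒜 (by decide : (1 + 0 : ZMod 2) = 1) (hsbrmem 1 0 u y hu1 hy0)
        rwa [stp_sbr10] at this
      have t1 : u * (v * y - y * v) ∈ evenCenter 𝒜 := hstar2 u hu hu1 _ hq1W hq1g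
      have t2 : v * (u * y - y * u) ∈ evenCenter 𝒜 := hstar2 v hv hv1 _ hq2W hq2g
      have t2' : (u * y - y * u) * v = v * (u * y - y * u) := by
        have := hU1 _ v (hWU _ hq2W) hq2g hv hv1
        rw [stp_scirc11] at this
        exact sub_eq_zero.mp this
      have hident : (u * v) * y - y * (u * v) =
          u * (v * y - y * v) + (u * y - y * u) * v := by noncomm_ring
      rw [hident, t2']
      exact stp_Zadd 𝒜 t1 t2
    -- commutation with the odd part of I
    have hodd : ∀ z ∈ I.carrier, z ∈ 𝒜 1 → (u * v) * z = z * (u * v) := by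
      intro z hz hz1
      have hpZ : u * z + z * u ∈ evenCenter 𝒜 := hPZodd u hu hu1 z hz hz1
      have hqZ : v * z + z * v ∈ evenCenter 𝒜 := hPZodd v hv hv1 z hz hz1
      have E1 : (u * v) * z - z * (u * v) =
          u * (v * z + z * v) - (u * z + z * u) * v := by noncomm_ring
      have E2 : (v * u) * z - z * (v * u) =
          v * (u * z + z * u) - (v * z + z * v) * u := by noncomm_ring
      have h12 : u * (v * z + z * v) - (u * z + z * u) * v =
          v * (u * z + z * u) - (v * z + z * v) * u := by
        rw [← E1, ← E2, huv]
      have h12' : u * (v * z + z * v) - (u * z + z * u) * v =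
          (u * z + z * u) * v - u * (v * z + z * v) := by
        rw [h12]
        rw [show v * (u * z + z * u) = (u * z + z * u) * v from (hpZ.2 v).symm,
          show (v * z + z * v) * u = u * (v * z + z * v) from hqZ.2 u]
      have hXX : (u * (v * z + z * v) - (u * z + z * u) * v) +
          (u * (v * z + z * v) - (u * z + z * u) * v) = 0 + 0 := by
        nth_rewrite 2 [h12']
        abel
      have hX0 := stp_half_eq (φ := φ) hXX
      exact sub_eq_zero.mp (E1.trans hX0)
    refine stp_CEN 𝒜 hprime I hIne huv_mem (fun j y hy hyj => ?_)
    rcases stp_zmod2_cases j with h | h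
    · exact heven y hy (h ▸ hyj)
    · exact hodd y hy (h ▸ hyj)
  exact ⟨hstep1, hgoal2, hgoal3⟩
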